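/- Let m ≥ 1, k, l ∈ ℕ, let P : ℝ^m → ℝ_{0,m} be a right monogenic function (P ∂_x = 0) that is homogeneous of degree k and satisfies Σ_{j=1}^m e_j P(x) e_j = (−1)^l (2l − m) P(x) for all x, and let D : (0,∞) → ℝ be continuously differentiable. Then for all x ≠ 0, writing r = |x|, the right Dirac derivative satisfies (D(r) ι(x) P(x) ι(x))∂_x = −((2k+m+2)D(r) + r D′(r)) ι(x) P(x) + (−1)^{l+1}(2l−m) D(r) P(x) ι(x). -/

import Mathlib

noncomputable section

open scoped BigOperators

/-- The `ℓ¹`-norm with respect to a Hamel basis.  On a finite-dimensional real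
vector space (such as the Clifford algebra `ℝ_{0,m}`) the induced topology is
the canonical one. -/
def hamelNorm (V : Type) [AddCommGroup V] [Module ℝ V] : AddGroupNorm V where
  toFun v := ∑ i ∈ ((Module.Basis.ofVectorSpace ℝ V).repr v).support,
      |(Module.Basis.ofVectorSpace ℝ V).repr v i|
  map_zero' := by simp
  add_le' := by
    intro x y
    classical
    set b := Module.Basis.ofVectorSpace ℝ V
    have hrepr : b.repr (x + y) = b.repr x + b.repr y := map_add _ _ _
    calc ∑ i ∈ (b.repr (x + y)).support, |b.repr (x + y) i|
        ≤ ∑ i ∈ (b.repr x).support ∪ (b.repr y).support, |b.repr (x + y) i| := by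
          refine Finset.sum_le_sum_of_subset_of_nonneg ?_ (fun i _ _ => abs_nonneg _)
          rw [hrepr]; exact Finsupp.support_add
      _ ≤ ∑ i ∈ (b.repr x).support ∪ (b.repr y).support, (|b.repr x i| + |b.repr y i|) := by
          refine Finset.sum_le_sum fun i _ => ?_
          rw [hrepr, Finsupp.add_apply]; exact abs_add_le _ _
      _ = (∑ i ∈ (b.repr x).support ∪ (b.repr y).support, |b.repr x i|)
            + ∑ i ∈ (b.repr x).support ∪ (b.repr y).support, |b.repr y i| :=
          Finset.sum_add_distrib
      _ = (∑ i ∈ (b.repr x).support, |b.repr x i|)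
            + ∑ i ∈ (b.repr y).support, |b.repr y i| := by
          rw [← Finset.sum_subset Finset.subset_union_left
              (fun i _ hi => by simp [Finsupp.notMem_support_iff.mp hi]),
            ← Finset.sum_subset Finset.subset_union_right
              (fun i _ hi => by simp [Finsupp.notMem_support_iff.mp hi])]
  neg' := by
    intro x
    simp [map_neg]
  eq_zero_of_map_eq_zero' := by
    classical
    intro x hx
    set b := Module.Basis.ofVectorSpace ℝ V
    have h0 : b.repr x = 0 := by
      ext i
      by_cases hi : i ∈ (b.repr x).support
      · exact abs_eq_zero.mp
          ((Finset.sum_eq_zero_iff_of_nonneg (fun i _ => abs_nonneg _)).mp hx i hi)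
      · simpa using Finsupp.notMem_support_iff.mp hi
    exact b.repr.map_eq_zero_iff.mp h0

/-- The quadratic form `Q(v) = -‖v‖²` on `ℝ^m`. -/
def Qneg (m : ℕ) : QuadraticForm ℝ (EuclideanSpace ℝ (Fin m)) :=
  (QuadraticMap.weightedSumSquares ℝ fun _ : Fin m => (-1 : ℝ)).comp
    (WithLp.linearEquiv 2 ℝ (Fin m → ℝ)).toLinearMap

/-- The real Clifford algebra `ℝ_{0,m}`. -/
abbrev Cl (m : ℕ) := CliffordAlgebra (Qneg m)

/-- The canonical embedding `ι : ℝ^m → ℝ_{0,m}`. -/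
abbrev ιC (m : ℕ) : EuclideanSpace ℝ (Fin m) →ₗ[ℝ] Cl m := CliffordAlgebra.ι (Qneg m)

/-- The generators `e₁, …, e_m` of `ℝ_{0,m}`. -/
def eC (m : ℕ) (j : Fin m) : Cl m := ιC m (EuclideanSpace.single j 1)

noncomputable instance (m : ℕ) : NormedAddCommGroup (Cl m) :=
  (hamelNorm (Cl m)).toNormedAddCommGroup

noncomputable instance (m : ℕ) : NormedSpace ℝ (Cl m) where
  norm_smul_le a v := by
    classical
    have hv : ‖v‖ = ∑ i ∈ ((Module.Basis.ofVectorSpace ℝ (Cl m)).repr v).support,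
        |(Module.Basis.ofVectorSpace ℝ (Cl m)).repr v i| := rfl
    have hav : ‖a • v‖ = ∑ i ∈ ((Module.Basis.ofVectorSpace ℝ (Cl m)).repr (a • v)).support,
        |(Module.Basis.ofVectorSpace ℝ (Cl m)).repr (a • v) i| := rfl
    set b := Module.Basis.ofVectorSpace ℝ (Cl m)
    have hrepr : b.repr (a • v) = a • b.repr v := map_smul _ _ _
    rw [hav, hv, Real.norm_eq_abs]
    calc ∑ i ∈ (b.repr (a • v)).support, |b.repr (a • v) i|
        ≤ ∑ i ∈ (b.repr v).support, |b.repr (a • v) i| := by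
          refine Finset.sum_le_sum_of_subset_of_nonneg ?_ (fun i _ _ => abs_nonneg _)
          rw [hrepr]; exact Finsupp.support_smul
      _ = ∑ i ∈ (b.repr v).support, |a| * |b.repr v i| := by
          refine Finset.sum_congr rfl fun i _ => ?_
          rw [hrepr, Finsupp.smul_apply, smul_eq_mul, abs_mul]
      _ = |a| * ∑ i ∈ (b.repr v).support, |b.repr v i| := by rw [Finset.mul_sum]

/-- The Dirac operator acting from the left: `∂_x f = Σⱼ eⱼ (∂_{xⱼ} f)`. -/
def diracL (m : ℕ) (f : EuclideanSpace ℝ (Fin m) → Cl m) (x : EuclideanSpace ℝ (Fin m)) : Cl m :=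
  ∑ j, eC m j * fderiv ℝ f x (EuclideanSpace.single j 1)

/-- The Dirac operator acting from the right: `f ∂_x = Σⱼ (∂_{xⱼ} f) eⱼ`. -/
def diracR (m : ℕ) (f : EuclideanSpace ℝ (Fin m) → Cl m) (x : EuclideanSpace ℝ (Fin m)) : Cl m :=
  ∑ j, fderiv ℝ f x (EuclideanSpace.single j 1) * eC m j


namespace ClAux

variable {m : ℕ}

lemma qneg_apply (v : EuclideanSpace ℝ (Fin m)) : Qneg m v = -∑ i, v i * v i := by
  simp [Qneg, QuadraticMap.weightedSumSquares_apply, Finset.sum_neg_distrib]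

lemma polar_qneg (u v : EuclideanSpace ℝ (Fin m)) :
    QuadraticMap.polar (Qneg m) u v = -(2 * ∑ i, u i * v i) := by
  simp only [QuadraticMap.polar, qneg_apply]
  have : ∀ i, (u + v) i * (u + v) i = u i * u i + v i * v i + 2 * (u i * v i) := by
    intro i
    have h1 : (u + v) i = u i + v i := rfl
    rw [h1]; ring
  rw [Finset.sum_congr rfl fun i _ => this i]
  simp [Finset.sum_add_distrib, Finset.mul_sum]
  ring

lemma qneg_single (j : Fin m) : Qneg m (EuclideanSpace.single j (1 : ℝ)) = -1 := by
  rw [qneg_apply]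
  have : ∀ i, (EuclideanSpace.single j (1:ℝ)) i * (EuclideanSpace.single j (1:ℝ)) i
      = if i = j then 1 else 0 := by
    intro i
    rw [EuclideanSpace.single_apply]
    by_cases h : i = j <;> simp [h]
  rw [Finset.sum_congr rfl fun i _ => this i]
  simp

lemma e_sq (j : Fin m) : eC m j * eC m j = -1 := by
  rw [eC, ιC, CliffordAlgebra.ι_sq_scalar, qneg_single, map_neg, map_one]

lemma e_mul_ι_add (j : Fin m) (x : EuclideanSpace ℝ (Fin m)) :
    eC m j * ιC m x + ιC m x * eC m j = algebraMap ℝ (Cl m) (-(2 * x j)) := by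
  rw [eC, ιC, CliffordAlgebra.ι_mul_ι_add_swap, polar_qneg]
  congr 1
  have : ∀ i, (EuclideanSpace.single j (1:ℝ)) i * x i = if i = j then x j else 0 := by
    intro i
    rw [EuclideanSpace.single_apply]
    rcases eq_or_ne i j with h | h
    · subst h; simp
    · simp [h]
  rw [Finset.sum_congr rfl fun i _ => this i]
  simp

lemma ι_mul_e (j : Fin m) (x : EuclideanSpace ℝ (Fin m)) :
    ιC m x * eC m j = (-(2 * x j)) • (1 : Cl m) - eC m j * ιC m x := by
  have h := e_mul_ι_add j x
  rw [Algebra.algebraMap_eq_smul_one] at h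
  linear_combination (norm := abel) h

lemma e_anti {i j : Fin m} (h : i ≠ j) : eC m i * eC m j = -(eC m j * eC m i) := by
  have h2 := e_mul_ι_add j (EuclideanSpace.single i 1)
  rw [show ιC m (EuclideanSpace.single i (1:ℝ)) = eC m i from rfl] at h2
  rw [EuclideanSpace.single_apply, if_neg fun hh => h hh.symm] at h2
  simp only [mul_zero, neg_zero, map_zero] at h2
  linear_combination (norm := abel) h2

lemma sum_single (x : EuclideanSpace ℝ (Fin m)) :
    ∑ j, x j • EuclideanSpace.single j (1 : ℝ) = x := by
  ext i
  have : ∀ j, (x j • EuclideanSpace.single j (1:ℝ)) i = if i = j then x j else 0 := by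
    intro j
    have h1 : (x j • EuclideanSpace.single j (1:ℝ)) i = x j * EuclideanSpace.single j (1:ℝ) i := rfl
    rw [h1, EuclideanSpace.single_apply]
    by_cases h : i = j <;> simp [h]
  have h2 : (∑ j, x j • EuclideanSpace.single j (1:ℝ)) i
      = ∑ j, (x j • EuclideanSpace.single j (1:ℝ)) i := by
    rw [WithLp.ofLp_sum, Finset.sum_apply]
  rw [h2, Finset.sum_congr rfl fun j _ => this j]
  simp

lemma ι_eq_sum (x : EuclideanSpace ℝ (Fin m)) : ιC m x = ∑ j, x j • eC m j := by
  conv_lhs => rw [← sum_single x]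
  rw [map_sum]
  exact Finset.sum_congr rfl fun j _ => by rw [map_smul]; rfl

/-- Product of generators indexed by a list. -/
def prodE (m : ℕ) (l : List (Fin m)) : Cl m := (l.map (eC m)).prod

@[simp] lemma prodE_nil : prodE m [] = 1 := rfl

@[simp] lemma prodE_cons (i : Fin m) (l : List (Fin m)) :
    prodE m (i :: l) = eC m i * prodE m l := by
  simp [prodE]

/-- The finite spanning set of ordered products. -/
def SpanSet (m : ℕ) : Set (Cl m) :=
  {y | ∃ u : List (Fin m), u.Pairwise (· < ·) ∧ y = prodE m u}

lemma spanSet_finite : (SpanSet m).Finite := by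
  apply Set.Finite.subset
    (Set.finite_range fun s : Finset (Fin m) => prodE m (s.sort (· ≤ ·)))
  rintro y ⟨u, hu, rfl⟩
  refine ⟨u.toFinset, ?_⟩
  show prodE m (u.toFinset.sort (· ≤ ·)) = prodE m u
  rw [List.toFinset_sort _ hu.nodup |>.mpr (hu.imp le_of_lt)]

lemma key_mul_mem (l : List (Fin m)) (hl : l.Pairwise (· < ·)) (j : Fin m) :
    eC m j * prodE m l ∈ Submodule.span ℝ
      {y | ∃ u : List (Fin m), u.Pairwise (· < ·) ∧ (∀ a ∈ u, a ∈ j :: l) ∧ y = prodE m u} := by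
  induction l generalizing j with
  | nil =>
    exact Submodule.subset_span ⟨[j], by simp, by simp, by simp⟩
  | cons i t ih =>
    have hit : ∀ a ∈ t, i < a := fun a ha => (List.pairwise_cons.mp hl).1 a ha
    have ht : t.Pairwise (· < ·) := (List.pairwise_cons.mp hl).2
    rcases lt_trichotomy j i with h | h | h
    · refine Submodule.subset_span ⟨j :: i :: t, ?_, ?_, by simp⟩
      · exact List.pairwise_cons.mpr ⟨fun a ha => by
          rcases List.mem_cons.mp ha with rfl | ha
          · exact h
          · exact h.trans (hit a ha), hl⟩
      · intro a ha; exact ha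
    · subst h
      have : eC m j * prodE m (j :: t) = -(prodE m t) := by
        rw [prodE_cons, ← mul_assoc, e_sq, neg_one_mul]
      rw [this]
      exact neg_mem (Submodule.subset_span ⟨t, ht, fun a ha => by simp [ha], rfl⟩)
    · have hne : j ≠ i := ne_of_gt h
      have hrw : eC m j * prodE m (i :: t) = -(eC m i * (eC m j * prodE m t)) := by
        rw [prodE_cons, ← mul_assoc, e_anti hne, neg_mul, mul_assoc]
      rw [hrw]
      refine neg_mem ?_
      have hmem := ih ht j
      -- multiply by `eC m i` on the left, staying in the target span
      have hstep : ∀ z ∈ Submodule.span ℝ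
          {y | ∃ u : List (Fin m), u.Pairwise (· < ·) ∧ (∀ a ∈ u, a ∈ j :: t) ∧ y = prodE m u},
          eC m i * z ∈ Submodule.span ℝ
            {y | ∃ u : List (Fin m), u.Pairwise (· < ·) ∧ (∀ a ∈ u, a ∈ j :: i :: t)
              ∧ y = prodE m u} := by
        intro z hz
        induction hz using Submodule.span_induction with
        | mem y hy =>
          obtain ⟨u, hu, husub, rfl⟩ := hy
          refine Submodule.subset_span ⟨i :: u, ?_, ?_, by simp⟩
          · refine List.pairwise_cons.mpr ⟨fun a ha => ?_, hu⟩
            rcases List.mem_cons.mp (husub a ha) with rfl | hat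
            · exact h
            · exact hit a hat
          · intro a ha
            rcases List.mem_cons.mp ha with rfl | ha
            · simp
            · rcases List.mem_cons.mp (husub a ha) with rfl | ha'
              · simp
              · simp [ha']
        | zero => simp
        | add y z _ _ hy hz => rw [mul_add]; exact add_mem hy hz
        | smul c y _ hy => rw [mul_smul_comm]; exact Submodule.smul_mem _ _ hy
      exact hstep _ hmem

lemma mulE_span_mem (j : Fin m) {z : Cl m} (hz : z ∈ Submodule.span ℝ (SpanSet m)) :
    eC m j * z ∈ Submodule.span ℝ (SpanSet m) := by
  induction hz using Submodule.span_induction with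
  | mem y hy =>
    obtain ⟨u, hu, rfl⟩ := hy
    refine Submodule.span_mono ?_ (key_mul_mem u hu j)
    rintro y ⟨v, hv, -, rfl⟩
    exact ⟨v, hv, rfl⟩
  | zero => simp
  | add y z _ _ hy hz => rw [mul_add]; exact add_mem hy hz
  | smul c y _ hy => rw [mul_smul_comm]; exact Submodule.smul_mem _ _ hy

lemma mul_span_mem {a b : Cl m} (ha : a ∈ Submodule.span ℝ (SpanSet m))
    (hb : b ∈ Submodule.span ℝ (SpanSet m)) : a * b ∈ Submodule.span ℝ (SpanSet m) := by
  induction ha using Submodule.span_induction with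
  | mem y hy =>
    obtain ⟨u, hu, rfl⟩ := hy
    clear hu
    induction u with
    | nil => simpa using hb
    | cons i t iht =>
      rw [prodE_cons, mul_assoc]
      exact mulE_span_mem i iht
  | zero => simp
  | add y z _ _ hy hz => rw [add_mul]; exact add_mem hy hz
  | smul c y _ hy => rw [smul_mul_assoc]; exact Submodule.smul_mem _ _ hy

lemma span_spanSet_eq_top : Submodule.span ℝ (SpanSet m) = ⊤ := by
  rw [eq_top_iff]
  rintro a -
  induction a using CliffordAlgebra.induction with
  | algebraMap r =>
    rw [Algebra.algebraMap_eq_smul_one]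
    exact Submodule.smul_mem _ _ (Submodule.subset_span ⟨[], by simp, by simp⟩)
  | ι v =>
    rw [show CliffordAlgebra.ι (Qneg m) v = ιC m v from rfl, ι_eq_sum]
    exact Submodule.sum_mem _ fun j _ => Submodule.smul_mem _ _
      (Submodule.subset_span ⟨[j], by simp, by simp⟩)
  | mul a b ha hb => exact mul_span_mem ha hb
  | add a b ha hb => exact add_mem ha hb

instance : Module.Finite ℝ (Cl m) :=
  ⟨by rw [← span_spanSet_eq_top]; exact Submodule.fg_span spanSet_finite⟩

/-- Multiplication on `Cl m` as a continuous bilinear map. -/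
def mulCL (m : ℕ) : Cl m →L[ℝ] Cl m →L[ℝ] Cl m :=
  LinearMap.toContinuousLinearMap
    ((LinearMap.toContinuousLinearMap (𝕜 := ℝ) (E := Cl m) (F' := Cl m)).toLinearMap ∘ₗ
      LinearMap.mul ℝ (Cl m))

@[simp] lemma mulCL_apply (a b : Cl m) : mulCL m a b = a * b := rfl

/-- Product rule for `Cl m`-valued functions. -/
lemma HasFDerivAt.mulCl {E : Type*} [NormedAddCommGroup E] [NormedSpace ℝ E]
    {f g : E → Cl m} {f' g' : E →L[ℝ] Cl m} {x : E}
    (hf : HasFDerivAt f f' x) (hg : HasFDerivAt g g' x) :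
    HasFDerivAt (fun y => f y * g y)
      ((mulCL m).flip (g x) ∘L f' + mulCL m (f x) ∘L g') x := by
  have h := ((mulCL m).isBoundedBilinearMap.hasFDerivAt (f x, g x)).comp x (hf.prodMk hg)
  have hfun : ((fun p : Cl m × Cl m => mulCL m p.1 p.2) ∘ fun y => (f y, g y))
      = fun y => f y * g y := rfl
  rw [hfun] at h
  refine h.congr_fderiv (Eq.symm ?_)
  ext v
  simp [IsBoundedBilinearMap.deriv_apply, add_comm]

end ClAux

set_option maxHeartbeats 1600000 in
/-- `(D(r) ι(x) P(x) ι(x))∂_x = -((2k+m+2)D(r) + r D′(r)) ι(x) P(x)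
+ (-1)^{l+1}(2l-m) D(r) P(x) ι(x)`. -/
theorem diracR_D_smul_xPx (m k l : ℕ) (hm : 1 ≤ m) (P : EuclideanSpace ℝ (Fin m) → Cl m)
    (hP : ContDiff ℝ 1 P) (hPmono : ∀ x, diracR m P x = 0)
    (hPhom : ∀ (t : ℝ) (x : EuclideanSpace ℝ (Fin m)), P (t • x) = t ^ k • P x)
    (hPl : ∀ x, ∑ j, eC m j * P x * eC m j
      = ((-1 : ℝ) ^ l * (2 * (l : ℝ) - (m : ℝ))) • P x)
    (D : ℝ → ℝ) (hD : ContDiffOn ℝ 1 D (Set.Ioi 0))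
    (x : EuclideanSpace ℝ (Fin m)) (hx : x ≠ 0) :
    diracR m (fun y => D ‖y‖ • (ιC m y * P y * ιC m y)) x
      = (-((2 * (k : ℝ) + (m : ℝ) + 2) * D ‖x‖ + ‖x‖ * deriv D ‖x‖)) • (ιC m x * P x)
        + ((-1 : ℝ) ^ (l + 1) * (2 * (l : ℝ) - (m : ℝ)) * D ‖x‖) • (P x * ιC m x) := by
  classical
  have hr : (0:ℝ) < ‖x‖ := norm_pos_iff.mpr hx
  -- derivative of the norm
  have hsq : HasFDerivAt (fun y : EuclideanSpace ℝ (Fin m) => ‖y‖^2)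
      (2 • innerSL ℝ x) x := (hasStrictFDerivAt_norm_sq x).hasFDerivAt
  have hsqrt : HasDerivAt Real.sqrt (1 / (2 * Real.sqrt (‖x‖^2))) (‖x‖^2) :=
    Real.hasDerivAt_sqrt (by positivity)
  have hN : HasFDerivAt (fun y : EuclideanSpace ℝ (Fin m) => ‖y‖)
      (‖x‖⁻¹ • innerSL ℝ x) x := by
    have h0 := hsqrt.comp_hasFDerivAt x hsq
    have hfun : (Real.sqrt ∘ fun y : EuclideanSpace ℝ (Fin m) => ‖y‖^2)
        = fun y => ‖y‖ := by
      funext y; simp [Function.comp, Real.sqrt_sq (norm_nonneg y)]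
    rw [hfun] at h0
    refine h0.congr_fderiv (Eq.symm ?_)
    rw [Real.sqrt_sq hr.le]
    ext v
    simp only [ContinuousLinearMap.smul_apply, smul_eq_mul, nsmul_eq_mul]
    field_simp
    ring
  set d := deriv D ‖x‖ with hd
  have hDd : HasDerivAt D d ‖x‖ :=
    ((hD.differentiableOn one_ne_zero).differentiableAt (Ioi_mem_nhds hr)).hasDerivAt
  have hC : HasFDerivAt (fun y : EuclideanSpace ℝ (Fin m) => D ‖y‖)
      (d • (‖x‖⁻¹ • innerSL ℝ x)) x := by
    have h0 := hDd.comp_hasFDerivAt x hN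
    rwa [Function.comp_def] at h0
  have hP' : HasFDerivAt P (fderiv ℝ P x) x :=
    (hP.differentiable one_ne_zero x).hasFDerivAt
  set P' := fderiv ℝ P x with hP'def
  set ιL := LinearMap.toContinuousLinearMap (ιC m) with hιLdef
  have hι : HasFDerivAt (fun y => ιC m y) ιL x := ιL.hasFDerivAt
  have hg1 := ClAux.HasFDerivAt.mulCl hι hP'
  have hg := ClAux.HasFDerivAt.mulCl hg1 hι
  have hF : HasFDerivAt (fun y => D ‖y‖ • (ιC m y * P y * ιC m y))
      (D ‖x‖ • ((ClAux.mulCL m).flip (ιC m x) ∘L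
          ((ClAux.mulCL m).flip (P x) ∘L ιL + ClAux.mulCL m (ιC m x) ∘L P')
        + ClAux.mulCL m (ιC m x * P x) ∘L ιL)
        + (d • (‖x‖⁻¹ • innerSL ℝ x)).smulRight (ιC m x * P x * ιC m x)) x :=
    hC.smul hg
  have hιLe : ∀ j : Fin m, ιL (EuclideanSpace.single j 1) = eC m j := fun j => rfl
  have hinner : ∀ j : Fin m,
      (innerSL ℝ x : EuclideanSpace ℝ (Fin m) →L[ℝ] ℝ) (EuclideanSpace.single j 1) = x j := by
    intro j
    simp [EuclideanSpace.inner_single_right]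
  -- Euler identity
  have hEuler : P' x = (k:ℝ) • P x := by
    have hsm : HasDerivAt (fun t : ℝ => t • x) x 1 := by
      simpa using (hasDerivAt_id (1:ℝ)).smul_const x
    have h1 : HasDerivAt (fun t : ℝ => P (t • x)) (P' x) 1 := by
      have hP1 : HasFDerivAt P P' ((1:ℝ) • x) := by rwa [one_smul]
      have h := hP1.comp_hasDerivAt 1 hsm
      rwa [Function.comp_def] at h
    have h2 : HasDerivAt (fun t : ℝ => P (t • x)) ((k:ℝ) • P x) 1 := by
      have hfun : (fun t : ℝ => P (t • x)) = fun t => t^k • P x := funext fun t => hPhom t x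
      rw [hfun]
      simpa using (hasDerivAt_pow k (1:ℝ)).smul_const (P x)
    exact h1.unique h2
  have hPsum : ∑ j, x j • P' (EuclideanSpace.single j 1) = P' x := by
    conv_rhs => rw [← ClAux.sum_single x]
    rw [map_sum]
    exact Finset.sum_congr rfl fun j _ => (map_smul P' _ _).symm
  have hdirac : ∑ j, P' (EuclideanSpace.single j 1) * eC m j = 0 := hPmono x
  have hxx : ιC m x * ιC m x = (-(‖x‖^2) : ℝ) • (1 : Cl m) := by
    rw [ιC, CliffordAlgebra.ι_sq_scalar, Algebra.algebraMap_eq_smul_one]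
    congr 1
    rw [ClAux.qneg_apply]
    congr 1
    rw [← real_inner_self_eq_norm_sq x]
    simp [PiLp.inner_apply, RCLike.inner_apply]
    rw [EuclideanSpace.norm_sq_eq]
    simp only [Real.norm_eq_abs, sq_abs, sq, abs_mul_abs_self]
  -- the four sums
  have sum1 : ∑ j, eC m j * P x * (ιC m x * eC m j)
      = (-2:ℝ) • (ιC m x * P x) - ((-1:ℝ)^l * (2*(l:ℝ) - (m:ℝ))) • (P x * ιC m x) := by
    have h1 : ∀ j, eC m j * P x * (ιC m x * eC m j)
        = (-(2 * x j)) • (eC m j * P x) - eC m j * P x * eC m j * ιC m x := by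
      intro j
      rw [ClAux.ι_mul_e, mul_sub, mul_smul_comm, mul_one, ← mul_assoc]
    rw [Finset.sum_congr rfl fun j _ => h1 j, Finset.sum_sub_distrib]
    congr 1
    · have h2 : ∀ j : Fin m, (-(2 * x j)) • (eC m j * P x)
          = (-2:ℝ) • ((x j • eC m j) * P x) := by
        intro j
        rw [smul_mul_assoc, smul_smul]
        ring_nf
      rw [Finset.sum_congr rfl fun j _ => h2 j, ← Finset.smul_sum, ← Finset.sum_mul,
        ← ClAux.ι_eq_sum]
    · rw [← Finset.sum_mul, hPl x, smul_mul_assoc]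
  have sum2 : ∑ j, ιC m x * P' (EuclideanSpace.single j 1) * (ιC m x * eC m j)
      = (-(2*(k:ℝ))) • (ιC m x * P x) := by
    have h1 : ∀ j, ιC m x * P' (EuclideanSpace.single j 1) * (ιC m x * eC m j)
        = (-(2 * x j)) • (ιC m x * P' (EuclideanSpace.single j 1))
          - ιC m x * (P' (EuclideanSpace.single j 1) * eC m j) * ιC m x := by
      intro j
      rw [ClAux.ι_mul_e, mul_sub, mul_smul_comm, mul_one, ← mul_assoc, mul_assoc (ιC m x)]
    rw [Finset.sum_congr rfl fun j _ => h1 j, Finset.sum_sub_distrib]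
    have h3 : ∑ j, ιC m x * (P' (EuclideanSpace.single j 1) * eC m j) * ιC m x = 0 := by
      rw [← Finset.sum_mul, ← Finset.mul_sum, hdirac, mul_zero, zero_mul]
    rw [h3, sub_zero]
    have h2 : ∀ j : Fin m, (-(2 * x j)) • (ιC m x * P' (EuclideanSpace.single j 1))
        = (-2:ℝ) • (ιC m x * (x j • P' (EuclideanSpace.single j 1))) := by
      intro j
      rw [mul_smul_comm, smul_smul]
      ring_nf
    rw [Finset.sum_congr rfl fun j _ => h2 j, ← Finset.smul_sum, ← Finset.mul_sum, hPsum,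
      hEuler, mul_smul_comm, smul_smul]
    ring_nf
  have sum3 : ∑ j, ιC m x * P x * eC m j * eC m j = (-(m:ℝ)) • (ιC m x * P x) := by
    have h1 : ∀ j : Fin m, ιC m x * P x * eC m j * eC m j = -(ιC m x * P x) := by
      intro j
      rw [mul_assoc, ClAux.e_sq, mul_neg_one]
    rw [Finset.sum_congr rfl fun j _ => h1 j, Finset.sum_const, Finset.card_univ,
      Fintype.card_fin, ← Nat.cast_smul_eq_nsmul ℝ m, smul_neg, ← neg_smul]
  have sum4 : ∑ j, (d * (‖x‖⁻¹ * x j)) • (ιC m x * P x * ιC m x * eC m j)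
      = (-(‖x‖ * d)) • (ιC m x * P x) := by
    have h1 : ∀ j : Fin m, (d * (‖x‖⁻¹ * x j)) • (ιC m x * P x * ιC m x * eC m j)
        = (d * ‖x‖⁻¹) • (ιC m x * P x * ιC m x * (x j • eC m j)) := by
      intro j
      rw [mul_smul_comm, smul_smul]
      ring_nf
    rw [Finset.sum_congr rfl fun j _ => h1 j, ← Finset.smul_sum, ← Finset.mul_sum,
      ← ClAux.ι_eq_sum, mul_assoc (ιC m x * P x), hxx, mul_smul_comm, mul_one, smul_smul]
    have : d * ‖x‖⁻¹ * -(‖x‖^2) = -(‖x‖ * d) := by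
      field_simp
    rw [this]
  -- put everything together
  show diracR m (fun y => D ‖y‖ • (ιC m y * P y * ιC m y)) x = _
  rw [diracR, hF.fderiv]
  have happ : ∀ j : Fin m,
      (D ‖x‖ • ((ClAux.mulCL m).flip (ιC m x) ∘L
          ((ClAux.mulCL m).flip (P x) ∘L ιL + ClAux.mulCL m (ιC m x) ∘L P')
        + ClAux.mulCL m (ιC m x * P x) ∘L ιL)
        + (d • (‖x‖⁻¹ • innerSL ℝ x)).smulRight (ιC m x * P x * ιC m x))
        (EuclideanSpace.single j 1) * eC m j
      = D ‖x‖ • (eC m j * P x * (ιC m x * eC m j))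
        + D ‖x‖ • (ιC m x * P' (EuclideanSpace.single j 1) * (ιC m x * eC m j))
        + D ‖x‖ • (ιC m x * P x * eC m j * eC m j)
        + (d * (‖x‖⁻¹ * x j)) • (ιC m x * P x * ιC m x * eC m j) := by
    intro j
    simp only [ContinuousLinearMap.add_apply, ContinuousLinearMap.smul_apply,
      ContinuousLinearMap.comp_apply, ContinuousLinearMap.flip_apply, ClAux.mulCL_apply,
      ContinuousLinearMap.smulRight_apply, hιLe, hinner, smul_eq_mul]
    simp only [add_mul, smul_mul_assoc, smul_add, mul_assoc]
  rw [Finset.sum_congr rfl fun j _ => happ j]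
  rw [Finset.sum_add_distrib, Finset.sum_add_distrib, Finset.sum_add_distrib,
    ← Finset.smul_sum, ← Finset.smul_sum, ← Finset.smul_sum, sum1, sum2, sum3, sum4]
  have hpow : ((-1:ℝ))^(l+1) = -(-1:ℝ)^l := by rw [pow_succ]; ring
  rw [hpow]
  module

end
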